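/- Every projectively isolated subshift is sofic, i.e., is a factor of a subshift of finite type. -/

import Mathlib

open scoped Topology

/-- The shift action of `G` on configurations `G → A`: `(g • x) h = x (g⁻¹ h)`. -/
def shiftMap {G A : Type} [Group G] (g : G) (x : G → A) : G → A := fun h => x (g⁻¹ * h)

/-- A set of configurations is shift-invariant. -/
def ShiftInvariant {G A : Type} [Group G] (X : Set (G → A)) : Prop :=
  ∀ g : G, ∀ x ∈ X, shiftMap g x ∈ X

/-- The prodiscrete topology on `G → A` (`A` discrete). -/
def cfgTop (G A : Type) : TopologicalSpace (G → A) :=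
  @Pi.topologicalSpace G (fun _ => A) (fun _ => ⊥)

/-- A subshift: a nonempty, closed, shift-invariant set of configurations. -/
def IsSubshift {G A : Type} [Group G] (X : Set (G → A)) : Prop :=
  X.Nonempty ∧ IsClosed[cfgTop G A] X ∧ ShiftInvariant X

/-- A pattern: a function from a finite subset of `G` to `A`. -/
abbrev Pattern (G A : Type) := Σ F : Finset G, ((↑F : Set G) → A)

/-- A pattern appears in a configuration if some translate of the configuration
restricts to the pattern on its support. -/
def Appears {G A : Type} [Group G] (p : Pattern G A) (x : G → A) : Prop :=
  ∃ g : G, ∀ h : (p.1 : Set G), shiftMap g x ↑h = p.2 h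

/-- A subshift of finite type: a subshift defined by a finite set of forbidden patterns. -/
def IsSFT {G A : Type} [Group G] (X : Set (G → A)) : Prop :=
  IsSubshift X ∧ ∃ F : Set (Pattern G A), F.Finite ∧
    X = {x | ∀ p ∈ F, ¬ Appears p x}

/-- The ball `B_n`: elements of `G` represented by words of length at most `n` over `S`. -/
def ball {G : Type} [Group G] (S : Finset G) (n : ℕ) : Set G :=
  {g | ∃ w : List G, (∀ s ∈ w, s ∈ S) ∧ w.length ≤ n ∧ w.prod = g}

/-- The language of `X` with support `F`: restrictions to `F` of elements of `X`. -/
def Lang {G A : Type} (F : Set G) (X : Set (G → A)) : Set (F → A) :=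
  (fun x => fun h : F => x ↑h) '' X

/-- The metric `D` on the space of subshifts:
`D(X,Y) = inf {2^{-n} : L_{B_n}(X) = L_{B_n}(Y)}` (capped at `2`). -/
noncomputable def Dmet {G A : Type} [Group G] (S : Finset G) (X Y : Set (G → A)) : ℝ :=
  sInf (insert 2 {r | ∃ n : ℕ, Lang (ball S n) X = Lang (ball S n) Y ∧ r = (2:ℝ)⁻¹ ^ n})

/-- A morphism of subshifts: a continuous shift-equivariant map. -/
def IsMorphism {G A B : Type} [Group G] (φ : (G → B) → (G → A)) : Prop :=
  Continuous[cfgTop G B, cfgTop G A] φ ∧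
    ∀ (g : G) (x : G → B), φ (shiftMap g x) = shiftMap g (φ x)

/-- A sofic subshift: the image of an SFT under a morphism. -/
def IsSofic {G A : Type} [Group G] (X : Set (G → A)) : Prop :=
  ∃ (B : Type) (_ : Fintype B) (Y : Set (G → B)) (φ : (G → B) → (G → A)),
    IsSFT Y ∧ IsMorphism φ ∧ φ '' Y = X

/-- A projectively isolated subshift: there are a finite alphabet `B`, a nonempty
`D`-open set `U` of subshifts of `B^G`, and a morphism `φ : B^G → A^G`
with `φ(Y) = X` for every `Y ∈ U`. -/
def ProjIsolated {G A : Type} [Group G] (S : Finset G) (X : Set (G → A)) : Prop :=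
  IsSubshift X ∧ ∃ (B : Type) (_ : Fintype B) (U : Set (Set (G → B)))
      (φ : (G → B) → (G → A)),
    (∀ Y ∈ U, IsSubshift Y) ∧ U.Nonempty ∧
    (∀ Y ∈ U, ∃ ε > 0, ∀ Z, IsSubshift Z → Dmet S Z Y < ε → Z ∈ U) ∧
    IsMorphism φ ∧ ∀ Y ∈ U, φ '' Y = X

section Aux

variable {G : Type} [Group G]

lemma shiftMap_one {A : Type} (x : G → A) : shiftMap (1 : G) x = x := by
  funext h; simp [shiftMap]

lemma shiftMap_mul {A : Type} (g g' : G) (x : G → A) :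
    shiftMap g (shiftMap g' x) = shiftMap (g * g') x := by
  funext h; simp [shiftMap, mul_assoc]

lemma ball_finite (S : Finset G) : ∀ n : ℕ, (ball S n).Finite := by
  intro n
  induction n with
  | zero =>
    apply Set.Finite.subset (Set.finite_singleton (1 : G))
    rintro g ⟨w, -, hlen, hprod⟩
    have hw : w = [] := List.length_eq_zero_iff.mp (Nat.le_zero.mp hlen)
    simp [hw] at hprod
    simp [← hprod]
  | succ n ih =>
    apply Set.Finite.subset (ih.union (Set.Finite.biUnion S.finite_toSet
      (fun s _ => ih.image (fun g => s * g))))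
    rintro g ⟨w, hmem, hlen, hprod⟩
    cases w with
    | nil =>
      exact Or.inl ⟨[], by simp, by simp, by simpa using hprod⟩
    | cons a t =>
      refine Or.inr (Set.mem_biUnion (hmem a List.mem_cons_self) ?_)
      refine ⟨t.prod, ⟨t, fun s hs => hmem s (List.mem_cons_of_mem a hs),
        ?_, rfl⟩, by simpa using hprod⟩
      simpa using Nat.succ_le_succ_iff.mp (by simpa using hlen)

lemma appears_isOpen {B : Type} (p : Pattern G B) :
    IsOpen[cfgTop G B] {x | Appears p x} := by
  letI : TopologicalSpace B := ⊥
  haveI : DiscreteTopology B := ⟨rfl⟩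
  letI : TopologicalSpace (G → B) := cfgTop G B
  have hset : {x : G → B | Appears p x} =
      ⋃ g : G, ⋂ h : (p.1 : Set G), {x : G → B | x (g⁻¹ * ↑h) = p.2 h} := by
    ext x
    simp only [Set.mem_setOf_eq, Set.mem_iUnion, Set.mem_iInter, Appears, shiftMap]
  rw [hset]
  apply isOpen_iUnion
  intro g
  apply isOpen_iInter_of_finite
  intro h
  have hc : Continuous (fun x : G → B => x (g⁻¹ * (h : G))) := continuous_apply _
  exact hc.isOpen_preimage ({p.2 h} : Set B) (isOpen_discrete _)

lemma appears_of_shift {B : Type} (p : Pattern G B) (g : G) (x : G → B)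
    (h : Appears p (shiftMap g x)) : Appears p x := by
  obtain ⟨g', hg'⟩ := h
  exact ⟨g' * g, fun h => by rw [← shiftMap_mul]; exact hg' h⟩

end Aux

/-- every projectively isolated subshift is sofic. -/
theorem statement4 {G A : Type} [Group G] [Fintype A]
    (S : Finset G) (hsym : ∀ s ∈ S, s⁻¹ ∈ S)
    (hgen : Subgroup.closure (S : Set G) = ⊤) :
    ∀ X : Set (G → A), ProjIsolated S X → IsSofic X := by
  intro X hX
  obtain ⟨hXsub, B, instB, U, φ, hUsub, ⟨Y, hY⟩, hopen, hφ, hφU⟩ := hX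
  obtain ⟨ε, hε, hball⟩ := hopen Y hY
  obtain ⟨n, hn⟩ := exists_pow_lt_of_lt_one hε (by norm_num : (2:ℝ)⁻¹ < 1)
  have hfin := ball_finite S n
  set Fn : Finset G := hfin.toFinset with hFn
  have hFc : (Fn : Set G) = ball S n := hfin.coe_toFinset
  set Forb : Set (Pattern G B) :=
    (fun f : ((Fn : Set G)) → B => (⟨Fn, f⟩ : Pattern G B)) '' (Lang (Fn : Set G) Y)ᶜ
    with hForb
  set Z : Set (G → B) := {x | ∀ p ∈ Forb, ¬ Appears p x} with hZ
  obtain ⟨hYne, hYcl, hYinv⟩ := hUsub Y hY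
  -- Y ⊆ Z
  have hYZ : Y ⊆ Z := by
    intro x hx p hp hap
    obtain ⟨f, hf, rfl⟩ := hp
    obtain ⟨g, hg⟩ := hap
    exact hf ⟨shiftMap g x, hYinv g x hx, funext hg⟩
  have hZne : Z.Nonempty := hYne.mono hYZ
  have hZcl : IsClosed[cfgTop G B] Z := by
    letI : TopologicalSpace (G → B) := cfgTop G B
    have : Z = ⋂ p ∈ Forb, {x | Appears p x}ᶜ := by
      ext x
      simp only [hZ, Set.mem_setOf_eq, Set.mem_iInter, Set.mem_compl_iff]
    rw [this]
    exact isClosed_biInter fun p _ => (appears_isOpen p).isClosed_compl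
  have hZinv : ShiftInvariant Z := by
    intro g x hx p hp hap
    exact hx p hp (appears_of_shift p g x hap)
  have hZsub : IsSubshift Z := ⟨hZne, hZcl, hZinv⟩
  -- Z is an SFT
  haveI : Fintype ((Fn : Set G) : Type) := Fn.finite_toSet.fintype
  have hForbFin : Forb.Finite := Set.Finite.image _ (Set.toFinite _)
  have hZSFT : IsSFT Z := ⟨hZsub, Forb, hForbFin, rfl⟩
  -- Languages of Z and Y agree on the ball
  have hLang : Lang (ball S n) Z = Lang (ball S n) Y := by
    rw [← hFc]
    apply Set.Subset.antisymm
    · rintro f ⟨x, hx, rfl⟩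
      by_contra hf
      exact hx ⟨Fn, fun h => x ↑h⟩ ⟨fun h => x ↑h, hf, rfl⟩ ⟨1, fun h => by rw [shiftMap_one]⟩
    · exact Set.image_mono hYZ
  -- distance estimate
  have hD : Dmet S Z Y ≤ (2:ℝ)⁻¹ ^ n := by
    apply csInf_le
    · refine ⟨0, ?_⟩
      rintro r (rfl | ⟨m, -, rfl⟩) <;> positivity
    · exact Set.mem_insert_iff.mpr (Or.inr ⟨n, hLang, rfl⟩)
  have hZU : Z ∈ U := hball Z hZsub (lt_of_le_of_lt hD hn)
  exact ⟨B, instB, Z, φ, hZSFT, hφ, hφU Z hZU⟩
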